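/- For each k ≥ 0, the ordinary generating function Σ_{n≥k} W_{q,m,ᾱ}(n,k) t^n equals t^k ∏_{j=0}^k (1 − [α_j + j·m]_q t)^{−1}, as an identity of formal power series (or for real |t| < 1/max_j [α_j+jm]_q). -/

import Mathlib

open Polynomial Finset

/-- The q-number `[x]_q = (1 - q^x)/(1 - q)` (real exponent via rpow). -/
noncomputable def qnum (q x : ℝ) : ℝ := (1 - q ^ x) / (1 - q)

lemma aux_indep (a : ℕ → ℝ) : ∀ (N : ℕ) (c : ℕ → ℝ),
    (∑ k ∈ Finset.range N, Polynomial.C (c k) *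
      ∏ j ∈ Finset.range k, (Polynomial.X - Polynomial.C (a j))) = 0 →
    ∀ k < N, c k = 0 := by
  intro N
  induction N with
  | zero => intro c _ k hk; omega
  | succ N ih =>
    intro c h k hk
    have hdeg : ∀ k : ℕ, (∏ j ∈ Finset.range k, (X - C (a j))).natDegree = k := by
      intro k
      rw [natDegree_prod_of_monic _ _ fun j _ => monic_X_sub_C _]
      simp
    have hmon : ∀ k : ℕ, (∏ j ∈ Finset.range k, (X - C (a j))).Monic := fun k =>
      monic_prod_of_monic _ _ fun j _ => monic_X_sub_C _
    have hcN : c N = 0 := by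
      have h2 := congrArg (fun p => Polynomial.coeff p N) h
      simp only [finset_sum_coeff, coeff_C_mul, coeff_zero] at h2
      rw [Finset.sum_range_succ] at h2
      rw [Finset.sum_eq_zero (fun i hi => ?_)] at h2
      · have : (∏ j ∈ Finset.range N, (X - C (a j))).coeff N = 1 := by
          have := (hmon N).coeff_natDegree
          rwa [hdeg N] at this
        rw [this] at h2; linarith
      · rw [coeff_eq_zero_of_natDegree_lt, mul_zero]
        rw [hdeg]; exact Finset.mem_range.mp hi
    rcases Nat.lt_succ_iff_lt_or_eq.mp hk with hk' | rfl
    · apply ih c _ k hk'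
      rw [Finset.sum_range_succ, hcN] at h
      simpa using h
    · exact hcN

theorem stmt7 (q m : ℝ) (α : ℕ → ℝ) (hq0 : 0 < q) (hq1 : q < 1)
    (W : ℕ → ℕ → ℝ)
    (hW : ∀ n : ℕ, (Polynomial.X : Polynomial ℝ) ^ n
      = ∑ k ∈ Finset.range (n + 1), Polynomial.C (W n k) * ∏ j ∈ Finset.range k, (Polynomial.X - Polynomial.C (qnum q (α j + j * m))))
    (hW0 : ∀ n k : ℕ, n < k → W n k = 0)
    (k : ℕ) :
    PowerSeries.mk (fun n => W n k) =
      PowerSeries.X ^ k *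
        ∏ j ∈ Finset.range (k + 1),
          (1 - PowerSeries.C (R := ℝ) (qnum q (α j + j * m)) * PowerSeries.X)⁻¹ := by
  set a : ℕ → ℝ := fun j => qnum q (α j + j * m) with ha
  set p : ℕ → Polynomial ℝ := fun k => ∏ j ∈ Finset.range k, (X - C (a j)) with hp
  -- W 0 0 = 1
  have hW00 : W 0 0 = 1 := by
    have := hW 0
    simp only [pow_zero, Finset.sum_range_one, Finset.range_zero, Finset.prod_empty,
      mul_one] at this
    have := congrArg (fun p => Polynomial.coeff p 0) this
    simpa using this.symm
  -- key identity from linear independence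
  have hkey : ∀ n : ℕ, ∀ i, i < n + 2 →
      W (n + 1) i = (if i = 0 then 0 else W n (i - 1)) + a i * W n i := by
    intro n
    set d : ℕ → ℝ := fun i => W (n + 1) i - (if i = 0 then 0 else W n (i - 1)) - a i * W n i
      with hd
    have hsum : (∑ i ∈ Finset.range (n + 2), Polynomial.C (d i) * p i) = 0 := by
      have e1 : (X : Polynomial ℝ) ^ (n + 1) = ∑ i ∈ Finset.range (n + 2), C (W (n+1) i) * p i := hW (n+1)
      have e2 : (X : Polynomial ℝ) ^ (n + 1)
          = ∑ i ∈ Finset.range (n + 2), (C (if i = 0 then 0 else W n (i-1)) + C (a i * W n i)) * p i := by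
        have hXp : ∀ i : ℕ, X * p i = p (i + 1) + C (a i) * p i := by
          intro i
          have : p (i + 1) = p i * (X - C (a i)) := by
            simp only [hp, Finset.prod_range_succ]
          rw [this]; ring
        calc (X : Polynomial ℝ) ^ (n + 1) = X * X ^ n := by ring
          _ = ∑ i ∈ Finset.range (n + 1), C (W n i) * (X * p i) := by
              rw [hW n, Finset.mul_sum]; apply Finset.sum_congr rfl; intro i _; ring
          _ = (∑ i ∈ Finset.range (n + 1), C (W n i) * p (i + 1))
              + ∑ i ∈ Finset.range (n + 1), C (a i * W n i) * p i := by
              rw [← Finset.sum_add_distrib]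
              apply Finset.sum_congr rfl; intro i _
              rw [hXp i, C_mul]; ring
          _ = (∑ i ∈ Finset.range (n + 2), C (if i = 0 then 0 else W n (i-1)) * p i)
              + ∑ i ∈ Finset.range (n + 2), C (a i * W n i) * p i := by
              congr 1
              · rw [Finset.sum_range_succ' (fun i => C (if i = 0 then 0 else W n (i-1)) * p i)]
                simp
              · rw [Finset.sum_range_succ (fun i => C (a i * W n i) * p i) (n+1),
                  hW0 n (n+1) (by omega)]
                simp
          _ = ∑ i ∈ Finset.range (n + 2), (C (if i = 0 then 0 else W n (i-1)) + C (a i * W n i)) * p i := by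
              rw [← Finset.sum_add_distrib]
              apply Finset.sum_congr rfl; intro i _; ring
      have h3 := e1.symm.trans e2
      rw [← sub_eq_zero] at h3
      rw [← h3, ← Finset.sum_sub_distrib]
      apply Finset.sum_congr rfl; intro i _
      simp only [hd, C_sub, C_add, C_mul]
      ring
    intro i hi
    have := aux_indep a (n + 2) d hsum i hi
    simp only [hd] at this
    linarith
  have hrec : ∀ n j : ℕ, W (n + 1) (j + 1) = W n j + a (j + 1) * W n (j + 1) := by
    intro n j
    rcases le_or_gt (j + 1) (n + 1) with hj | hj
    · have := hkey n (j + 1) (by omega)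
      simpa using this
    · rw [hW0 n j (by omega), hW0 n (j+1) (by omega), hW0 (n+1) (j+1) (by omega)]
      ring
  have hrec0 : ∀ n : ℕ, W (n + 1) 0 = a 0 * W n 0 := by
    intro n
    have := hkey n 0 (by omega)
    simpa using this
  -- the key power series identities
  have hunit : ∀ j : ℕ, (1 - PowerSeries.C (R := ℝ) (a j) * PowerSeries.X)
      * (1 - PowerSeries.C (R := ℝ) (a j) * PowerSeries.X)⁻¹ = 1 := by
    intro j
    apply PowerSeries.mul_inv_cancel
    simp
  have hmain : ∀ j : ℕ, PowerSeries.mk (fun n => W n j) *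
      ∏ i ∈ Finset.range (j + 1), (1 - PowerSeries.C (R := ℝ) (a i) * PowerSeries.X)
      = PowerSeries.X ^ j := by
    intro j
    induction j with
    | zero =>
      rw [Finset.prod_range_one, pow_zero]
      have expand : PowerSeries.mk (fun n => W n 0) * (1 - PowerSeries.C (R := ℝ) (a 0) * PowerSeries.X)
          = PowerSeries.mk (fun n => W n 0)
            - PowerSeries.C (R := ℝ) (a 0) * (PowerSeries.mk (fun n => W n 0) * PowerSeries.X) := by
        ring
      rw [expand]
      ext n
      cases n with
      | zero => simp [hW00]
      | succ n =>
        simp only [map_sub, PowerSeries.coeff_mk, PowerSeries.coeff_C_mul,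
          PowerSeries.coeff_succ_mul_X, PowerSeries.coeff_one]
        rw [hrec0 n]
        simp
    | succ j ih =>
      have step : PowerSeries.mk (fun n => W n (j + 1)) *
          (1 - PowerSeries.C (R := ℝ) (a (j + 1)) * PowerSeries.X)
          = PowerSeries.X * PowerSeries.mk (fun n => W n j) := by
        have expand : PowerSeries.mk (fun n => W n (j+1)) * (1 - PowerSeries.C (R := ℝ) (a (j+1)) * PowerSeries.X)
            = PowerSeries.mk (fun n => W n (j+1))
              - PowerSeries.C (R := ℝ) (a (j+1)) * (PowerSeries.mk (fun n => W n (j+1)) * PowerSeries.X) := by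
          ring
        rw [expand]
        ext n
        cases n with
        | zero => simp [hW0 0 (j+1) (by omega)]
        | succ n =>
          simp only [map_sub, PowerSeries.coeff_mk, PowerSeries.coeff_C_mul,
            PowerSeries.coeff_succ_mul_X, PowerSeries.coeff_succ_X_mul]
          rw [hrec n j]
          ring
      calc PowerSeries.mk (fun n => W n (j+1)) *
          ∏ i ∈ Finset.range (j + 2), (1 - PowerSeries.C (R := ℝ) (a i) * PowerSeries.X)
          = (PowerSeries.mk (fun n => W n (j+1)) * (1 - PowerSeries.C (R := ℝ) (a (j+1)) * PowerSeries.X))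
            * ∏ i ∈ Finset.range (j + 1), (1 - PowerSeries.C (R := ℝ) (a i) * PowerSeries.X) := by
            rw [Finset.prod_range_succ]; ring
        _ = PowerSeries.X * (PowerSeries.mk (fun n => W n j) *
            ∏ i ∈ Finset.range (j + 1), (1 - PowerSeries.C (R := ℝ) (a i) * PowerSeries.X)) := by
            rw [step]; ring
        _ = PowerSeries.X ^ (j + 1) := by rw [ih]; ring
  have hprod : (∏ i ∈ Finset.range (k + 1), (1 - PowerSeries.C (R := ℝ) (a i) * PowerSeries.X))
      * ∏ i ∈ Finset.range (k + 1), (1 - PowerSeries.C (R := ℝ) (a i) * PowerSeries.X)⁻¹ = 1 := by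
    rw [← Finset.prod_mul_distrib]
    rw [Finset.prod_congr rfl (fun i _ => hunit i)]
    simp
  calc PowerSeries.mk (fun n => W n k)
      = PowerSeries.mk (fun n => W n k) *
        ((∏ i ∈ Finset.range (k + 1), (1 - PowerSeries.C (R := ℝ) (a i) * PowerSeries.X))
        * ∏ i ∈ Finset.range (k + 1), (1 - PowerSeries.C (R := ℝ) (a i) * PowerSeries.X)⁻¹) := by
        rw [hprod, mul_one]
    _ = (PowerSeries.mk (fun n => W n k) *
        ∏ i ∈ Finset.range (k + 1), (1 - PowerSeries.C (R := ℝ) (a i) * PowerSeries.X))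
        * ∏ i ∈ Finset.range (k + 1), (1 - PowerSeries.C (R := ℝ) (a i) * PowerSeries.X)⁻¹ := by ring
    _ = PowerSeries.X ^ k *
        ∏ i ∈ Finset.range (k + 1), (1 - PowerSeries.C (R := ℝ) (a i) * PowerSeries.X)⁻¹ := by
        rw [hmain k]
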